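/- Let Γ be a finite simple graph on r vertices such that every induced subgraph of Γ on m vertices with m ≥ 3 has at most 2m − 4 edges (a property enjoyed by every planar bipartite graph). Then there is an ordering n₁, n₂, …, n_r of the vertices of Γ such that each vertex n_i is adjacent to at most three of the preceding vertices n₁, …, n_{i−1}. -/

import Mathlib

noncomputable section

open Finset

open scoped Classical in
lemma induced_handshake {V : Type*} [Fintype V] (Γ : SimpleGraph V) (s : Finset V) :
    ∑ v ∈ s, (s.filter (Γ.Adj v)).card =
      2 * (Γ.edgeFinset.filter fun e => ∀ v ∈ e, v ∈ s).card := by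
  classical
  let Γ' := Γ.induce (↑s : Set V)
  have hdeg : ∀ v : (↑s : Set V), Γ'.degree v = (s.filter (Γ.Adj ↑v)).card := by
    intro v
    rw [SimpleGraph.degree]
    refine Finset.card_bij (fun w _ => (w : V)) ?_ ?_ ?_
    · intro w hw
      simp only [SimpleGraph.mem_neighborFinset] at hw
      simp only [mem_filter]
      exact ⟨w.2, hw⟩
    · intro a ha b hb hab; exact Subtype.ext hab
    · intro b hb
      simp only [mem_filter] at hb
      refine ⟨⟨b, hb.1⟩, ?_, rfl⟩
      simp only [SimpleGraph.mem_neighborFinset]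
      exact hb.2
  have hedge : Γ'.edgeFinset.card = (Γ.edgeFinset.filter fun e => ∀ v ∈ e, v ∈ s).card := by
    refine Finset.card_bij (fun e _ => Sym2.map Subtype.val e) ?_ ?_ ?_
    · intro e he
      induction e with
      | _ a b =>
        simp only [SimpleGraph.mem_edgeFinset, SimpleGraph.mem_edgeSet] at he
        simp only [mem_filter, Sym2.map_pair_eq, SimpleGraph.mem_edgeFinset,
          SimpleGraph.mem_edgeSet, Sym2.mem_iff]
        refine ⟨he, ?_⟩
        rintro v (rfl | rfl) <;> [exact a.2; exact b.2]
    · intro a _ b _ hab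
      exact Sym2.map.injective Subtype.val_injective hab
    · intro e he
      simp only [mem_filter, SimpleGraph.mem_edgeFinset, SimpleGraph.mem_edgeSet] at he
      induction e with
      | _ a b =>
        have ha : a ∈ s := he.2 a (by simp)
        have hb : b ∈ s := he.2 b (by simp)
        exact ⟨s(⟨a, ha⟩, ⟨b, hb⟩), by
          simp only [SimpleGraph.mem_edgeFinset, SimpleGraph.mem_edgeSet]
          exact he.1, by simp⟩
  calc ∑ v ∈ s, (s.filter (Γ.Adj v)).card
      = ∑ v : (↑s : Set V), Γ'.degree v := by
        rw [← Finset.sum_coe_sort s]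
        exact Finset.sum_congr rfl fun v _ => (hdeg v).symm
    _ = 2 * Γ'.edgeFinset.card := SimpleGraph.sum_degrees_eq_twice_card_edges Γ'
    _ = _ := by rw [hedge]

open scoped Classical in
lemma exists_low_degree {V : Type*} [Fintype V] (Γ : SimpleGraph V)
    (h : ∀ s : Finset V, 3 ≤ s.card →
      (Γ.edgeFinset.filter fun e => ∀ v ∈ e, v ∈ s).card ≤ 2 * s.card - 4)
    (s : Finset V) (hs : s.Nonempty) :
    ∃ v ∈ s, (s.filter (Γ.Adj v)).card ≤ 3 := by
  by_contra hc
  push_neg at hc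
  have hdeg : ∀ v ∈ s, 4 ≤ (s.filter (Γ.Adj v)).card := fun v hv => hc v hv
  obtain ⟨v, hv⟩ := hs
  have hsub : s.filter (Γ.Adj v) ⊆ s.erase v := by
    intro w hw
    simp only [mem_filter] at hw
    exact mem_erase.2 ⟨fun hvw => Γ.loopless.irrefl v (hvw ▸ hw.2), hw.1⟩
  have h5 : 5 ≤ s.card := by
    have := (hdeg v hv).trans (card_le_card hsub)
    have := card_erase_of_mem hv
    omega
  have hsum : 4 * s.card ≤ ∑ v ∈ s, (s.filter (Γ.Adj v)).card := by
    calc 4 * s.card = ∑ _v ∈ s, 4 := by rw [Finset.sum_const, smul_eq_mul, mul_comm]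
      _ ≤ _ := Finset.sum_le_sum hdeg
  rw [induced_handshake] at hsum
  have := h s (by omega)
  omega

open scoped Classical in
lemma exists_good_list {V : Type*} [Fintype V] (Γ : SimpleGraph V)
    (h : ∀ s : Finset V, 3 ≤ s.card →
      (Γ.edgeFinset.filter fun e => ∀ v ∈ e, v ∈ s).card ≤ 2 * s.card - 4) :
    ∀ (n : ℕ) (s : Finset V), s.card = n → ∃ l : List V, l.Nodup ∧ l.toFinset = s ∧
      ∀ i : Fin l.length,
        (Finset.univ.filter fun j : Fin l.length =>
          j < i ∧ Γ.Adj (l.get j) (l.get i)).card ≤ 3 := by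
  intro n
  induction n with
  | zero =>
    intro s hs
    exact ⟨[], by simp, by simp [Finset.card_eq_zero.mp hs], fun i => i.elim0⟩
  | succ n ih =>
    intro s hs
    have hne : s.Nonempty := by rw [← Finset.card_pos]; omega
    obtain ⟨v, hv, hv3⟩ := exists_low_degree Γ h s hne
    obtain ⟨l₀, hnd, htf, hp⟩ := ih (s.erase v) (by rw [card_erase_of_mem hv]; omega)
    have hvl : v ∉ l₀ := by
      rw [← List.mem_toFinset, htf]
      simp
    have hndl : (l₀ ++ [v]).Nodup := by
      simp [List.nodup_append, hnd, hvl]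
      rintro a ha rfl
      exact hvl ha
    refine ⟨l₀ ++ [v], hndl, ?_, ?_⟩
    · rw [List.toFinset_append, htf]
      simp only [List.toFinset_cons, List.toFinset_nil, LawfulSingleton.insert_empty_eq]
      rw [Finset.union_comm, ← Finset.insert_eq, Finset.insert_erase hv]
    · intro i
      have hlen : (l₀ ++ [v]).length = l₀.length + 1 := by simp
      rcases Nat.lt_or_ge i.val l₀.length with hi | hi
      · -- i is an index into l₀
        set i' : Fin l₀.length := ⟨i.val, hi⟩ with hi'
        refine le_trans ?_ (hp i')
        apply Finset.card_le_card_of_injOn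
          (fun j => if hj : j.val < l₀.length then ⟨j.val, hj⟩ else i')
        · intro j hj
          simp only [mem_coe, mem_filter, mem_univ, true_and] at hj ⊢
          have hjlt : j.val < l₀.length := lt_of_lt_of_le hj.1 (le_of_lt hi)
          rw [dif_pos hjlt]
          refine ⟨Fin.mk_lt_mk.mpr hj.1, ?_⟩
          have h1 : (l₀ ++ [v]).get j = l₀.get ⟨j.val, hjlt⟩ := by
            simp only [List.get_eq_getElem]
            exact List.getElem_append_left hjlt
          have h2 : (l₀ ++ [v]).get i = l₀.get i' := by
            simp only [List.get_eq_getElem]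
            exact List.getElem_append_left hi
          rw [← h1, ← h2]
          exact hj.2
        · intro a ha b hb hab
          simp only [coe_filter, Set.mem_setOf_eq] at ha hb
          have halt : a.val < l₀.length := lt_of_lt_of_le ha.2.1 (le_of_lt hi)
          have hblt : b.val < l₀.length := lt_of_lt_of_le hb.2.1 (le_of_lt hi)
          dsimp only at hab
          rw [dif_pos halt, dif_pos hblt] at hab
          rw [Fin.mk.injEq] at hab
          exact Fin.ext hab
      · -- i is the last index: the appended vertex v
        have hieq : i.val = l₀.length := by
          have h2 := i.2
          omega
        have hgv : (l₀ ++ [v]).get i = v := by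
          simp only [List.get_eq_getElem]
          have : (l₀ ++ [v])[i.val] = (l₀ ++ [v])[l₀.length]'(by simp) := by
            congr 1
          rw [this]
          exact List.getElem_concat_length rfl _
        refine le_trans ?_ hv3
        apply Finset.card_le_card_of_injOn (fun j => (l₀ ++ [v]).get j)
        · intro j hj
          simp only [mem_coe, mem_filter, mem_univ, true_and] at hj
          have hjlt : j.val < l₀.length := by
            have := hj.1
            omega
          have h1 : (l₀ ++ [v]).get j = l₀.get ⟨j.val, hjlt⟩ := by
            simp only [List.get_eq_getElem]
            exact List.getElem_append_left hjlt
          have hmem : (l₀ ++ [v]).get j ∈ s.erase v := by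
            rw [← htf, List.mem_toFinset, h1]
            exact List.get_mem _ _
          rw [mem_coe, mem_filter]
          refine ⟨mem_of_mem_erase hmem, ?_⟩
          have := hj.2
          rw [hgv] at this
          exact this.symm
        · intro a _ b _ hab
          exact List.nodup_iff_injective_get.mp hndl hab

open scoped Classical in
/-- If every `m`-vertex induced subgraph (`m ≥ 3`) of a finite simple graph `Γ` has at
most `2m - 4` edges (as holds for planar bipartite graphs), then the vertices of `Γ` can
be ordered so that each vertex is adjacent to at most three earlier vertices. -/
theorem ordering_with_few_back_neighbors {V : Type*} [Fintype V] (Γ : SimpleGraph V)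
    (h : ∀ s : Finset V, 3 ≤ s.card →
      (Γ.edgeFinset.filter fun e => ∀ v ∈ e, v ∈ s).card ≤ 2 * s.card - 4) :
    ∃ e : Fin (Fintype.card V) ≃ V, ∀ i : Fin (Fintype.card V),
      (Finset.univ.filter fun j : Fin (Fintype.card V) =>
        j < i ∧ Γ.Adj (e j) (e i)).card ≤ 3 := by
  obtain ⟨l, hnd, htf, hp⟩ := exists_good_list Γ h (Fintype.card V) Finset.univ (by simp)
  have hlen : l.length = Fintype.card V := by
    rw [← List.toFinset_card_of_nodup hnd, htf, Finset.card_univ]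
  have hall : ∀ x : V, x ∈ l := fun x => by
    rw [← List.mem_toFinset, htf]; exact mem_univ x
  refine ⟨(finCongr hlen.symm).trans (hnd.getEquivOfForallMemList l hall), fun i => ?_⟩
  refine le_trans ?_ (hp (Fin.cast hlen.symm i))
  apply Finset.card_le_card_of_injOn (fun j => Fin.cast hlen.symm j)
  · intro j hj
    simp only [mem_coe, mem_filter, mem_univ, true_and, Equiv.trans_apply, finCongr_apply,
      List.Nodup.getEquivOfForallMemList_apply] at hj ⊢
    exact hj
  · intro a _ b _ hab
    dsimp only at hab
    simpa [Fin.ext_iff] using hab
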